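/- arXiv:1606.01715 — 6 statements merged into one kernel-verified Lean document; each statement's English description precedes it below -/
import Mathlib

section
/- α(2) = 3, α(4) = 6, and α(2^n) = 3·2^{n-2} for all n ≥ 3. -/
noncomputable def fibAlpha (n : ℕ) : ℕ := sInf {m | 0 < m ∧ n ∣ Nat.fib m}

lemma fib_odd_of_not_three_dvd {j : ℕ} (h : ¬ 3 ∣ j) : Nat.fib j % 2 = 1 := by
  rcases Nat.even_or_odd (Nat.fib j) with he | ho
  · exfalso
    have hc : Nat.Coprime 3 j := (Nat.prime_three.coprime_iff_not_dvd).mpr h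
    have hg : Nat.fib (Nat.gcd 3 j) = Nat.gcd (Nat.fib 3) (Nat.fib j) := Nat.fib_gcd 3 j
    rw [hc] at hg
    have h2 : 2 ∣ Nat.gcd (Nat.fib 3) (Nat.fib j) :=
      Nat.dvd_gcd (by norm_num) he.two_dvd
    rw [← hg] at h2
    simp [Nat.fib_one] at h2
  · exact Nat.odd_iff.mp ho

lemma fib_three_two_pow (k : ℕ) (hk : 1 ≤ k) :
    ∃ u, u % 2 = 1 ∧ Nat.fib (3 * 2 ^ k) = 2 ^ (k + 2) * u := by
  induction k, hk using Nat.le_induction with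
  | base => exact ⟨1, rfl, by norm_num⟩
  | succ k hk ih =>
    obtain ⟨u, hu, hfib⟩ := ih
    set m := 3 * 2 ^ k with hm
    have h3m : 3 ∣ m := ⟨2 ^ k, rfl⟩
    have hodd : Nat.fib (m + 1) % 2 = 1 := fib_odd_of_not_three_dvd (by omega)
    have hge : Nat.fib m ≤ Nat.fib (m + 1) := Nat.fib_le_fib_succ
    have key : 3 * 2 ^ (k + 1) = 2 * m := by rw [hm]; ring
    rw [key, Nat.fib_two_mul]
    set G := Nat.fib (m + 1) with hG
    set q := 2 ^ (k + 1) * u with hq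
    have hFq : Nat.fib m = 2 * q := by rw [hfib, hq]; ring
    have hqe : q % 2 = 0 := by
      have : q = 2 * (2 ^ k * u) := by rw [hq]; ring
      omega
    refine ⟨u * (G - q), ?_, ?_⟩
    · have ht : (G - q) % 2 = 1 := by omega
      rw [Nat.mul_mod, hu, ht]
    · have h1 : 2 * G - Nat.fib m = 2 * (G - q) := by omega
      rw [h1, hfib]
      have : G - q ≤ G := Nat.sub_le _ _
      ring

lemma pow_not_dvd {a u : ℕ} (hu : u % 2 = 1) : ¬ 2 ^ (a + 1) ∣ 2 ^ a * u := by
  rintro ⟨c, hc⟩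
  rw [pow_succ] at hc
  have : u = 2 * c := by
    have h2 : (0:ℕ) < 2 ^ a := Nat.pow_pos (by norm_num)
    have := hc
    rw [mul_assoc] at this
    exact Nat.eq_of_mul_eq_mul_left h2 this
  omega

lemma fibAlpha_eq {a r : ℕ} (hr : 0 < r) (h1 : a ∣ Nat.fib r)
    (h2 : ∀ m, 0 < m → a ∣ Nat.fib m → r ≤ m) : fibAlpha a = r := by
  have hmem : r ∈ {m | 0 < m ∧ a ∣ Nat.fib m} := ⟨hr, h1⟩
  have hne : {m | 0 < m ∧ a ∣ Nat.fib m}.Nonempty := ⟨r, hmem⟩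
  have hin := Nat.sInf_mem hne
  exact le_antisymm (Nat.sInf_le hmem) (h2 _ hin.1 hin.2)

theorem fibAlpha_two_pow :
    fibAlpha 2 = 3 ∧ fibAlpha 4 = 6 ∧ ∀ n : ℕ, 3 ≤ n → fibAlpha (2 ^ n) = 3 * 2 ^ (n - 2) := by
  refine ⟨?_, ?_, ?_⟩
  · refine fibAlpha_eq (by norm_num) (by norm_num) ?_
    intro m hm hd
    by_contra hlt
    interval_cases m <;> simp_all
  · refine fibAlpha_eq (by norm_num) (by norm_num) ?_
    intro m hm hd
    set g := Nat.gcd m 6 with hg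
    have hdg : (4:ℕ) ∣ Nat.fib g := by
      rw [hg, Nat.fib_gcd]
      exact Nat.dvd_gcd hd (by norm_num)
    have hg6 : g ∣ 6 := Nat.gcd_dvd_right m 6
    have hgpos : 0 < g := Nat.gcd_pos_of_pos_left 6 hm
    have hg6' : g = 6 := by
      have hle : g ≤ 6 := Nat.le_of_dvd (by norm_num) hg6
      interval_cases g <;> first | rfl | (exfalso; revert hdg; norm_num)
    have : 6 ∣ m := hg6' ▸ Nat.gcd_dvd_left m 6
    exact Nat.le_of_dvd hm this
  · intro n hn
    set k := n - 2 with hk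
    have hk1 : 1 ≤ k := by omega
    have hnk : n = k + 2 := by omega
    obtain ⟨u, hu, hfib⟩ := fib_three_two_pow k hk1
    refine fibAlpha_eq (by positivity) ?_ ?_
    · rw [hnk, hfib]; exact Dvd.intro u rfl
    · intro m hm hd
      rw [hnk] at hd
      set r := 3 * 2 ^ k with hr
      set g := Nat.gcd m r with hg
      have hdg : (2:ℕ) ^ (k + 2) ∣ Nat.fib g := by
        rw [hg, Nat.fib_gcd]
        exact Nat.dvd_gcd hd (hfib ▸ Dvd.intro u rfl)
      have hgr : g ∣ r := Nat.gcd_dvd_right m r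
      by_cases h3 : 3 ∣ g
      · -- g = 3 * 2^i
        obtain ⟨h, hh⟩ := h3
        have hh2 : h ∣ 2 ^ k := by
          have : 3 * h ∣ 3 * 2 ^ k := hh ▸ hgr
          exact (mul_dvd_mul_iff_left (by norm_num : (3:ℕ) ≠ 0)).mp this
        obtain ⟨i, hik, hi⟩ := (Nat.dvd_prime_pow Nat.prime_two).mp hh2
        rcases eq_or_lt_of_le hik with heq | hlt
        · -- g = r, so r ∣ m
          have : g = r := by rw [hh, hi, heq]
          have : r ∣ m := this ▸ Nat.gcd_dvd_left m r
          exact Nat.le_of_dvd hm this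
        · exfalso
          -- g ∣ 3 * 2^(k-1)
          have hgd : g ∣ 3 * 2 ^ (k - 1) := by
            rw [hh, hi]
            exact mul_dvd_mul_left 3 (pow_dvd_pow 2 (by omega))
          have hfd : Nat.fib g ∣ Nat.fib (3 * 2 ^ (k - 1)) := Nat.fib_dvd _ _ hgd
          rcases eq_or_lt_of_le hk1 with hk1' | hk2
          · -- k = 1, g ∣ 3, fib 3 = 2, need 2^3 ∣ 2
            have : Nat.fib g ∣ 2 := by
              rw [← hk1'] at hfd
              simpa [show Nat.fib 3 = 2 from rfl] using hfd
            have h8 : (2:ℕ) ^ (k + 2) ∣ 2 := dvd_trans hdg this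
            rw [← hk1'] at h8
            norm_num at h8
          · -- k ≥ 2
            obtain ⟨v, hv, hfv⟩ := fib_three_two_pow (k - 1) (by omega)
            rw [hfv] at hfd
            have : (2:ℕ) ^ (k + 2) ∣ 2 ^ (k - 1 + 2) * v := dvd_trans hdg hfd
            have : (2:ℕ) ^ (k - 1 + 2 + 1) ∣ 2 ^ (k - 1 + 2) * v := by
              refine dvd_trans (pow_dvd_pow 2 (by omega)) this
            exact pow_not_dvd hv this
      · -- fib g odd but 2 ∣ fib g
        exfalso
        have hodd := fib_odd_of_not_three_dvd h3
        have : (2:ℕ) ∣ Nat.fib g := dvd_trans (dvd_pow_self 2 (by omega : k + 2 ≠ 0)) hdg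
        omega
end

section
/- Let p be an odd prime and let e_p := max{m : p^m | a_{α(p)}}. Then for all n > e_p, α(p^n) = p^{n-e_p}·α(p). -/
/-- `e_p`: the exact power of `p` dividing `fib (α p)`. -/
noncomputable def fibE (p : ℕ) : ℕ := (Nat.fib (fibAlpha p)).factorization p

section FibLTE
open Nat

lemma exists_pos_fib_dvd (N : ℕ) (hN : 0 < N) : ∃ m, 0 < m ∧ N ∣ Nat.fib m := by
  haveI : NeZero N := ⟨hN.ne'⟩
  set f : ℕ → ZMod N × ZMod N := fun n => ((Nat.fib n : ZMod N), (Nat.fib (n+1) : ZMod N)) with hf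
  obtain ⟨a, b, hne, heq⟩ := Finite.exists_ne_map_eq_of_infinite f
  have key : ∀ a c : ℕ, f (a + c) = f a → f c = f 0 := by
    intro a
    induction a with
    | zero => intro c h; simpa using h
    | succ a ih =>
      intro c h
      apply ih
      have h1 : (Nat.fib (a + 1 + c) : ZMod N) = Nat.fib (a + 1) := congrArg Prod.fst h
      have h2 : (Nat.fib (a + 1 + c + 1) : ZMod N) = Nat.fib (a + 1 + 1) := congrArg Prod.snd h
      have e1 : (Nat.fib (a + c) : ZMod N) = Nat.fib a := by
        have c1 : (Nat.fib (a + c + 2) : ZMod N) = Nat.fib (a + c) + Nat.fib (a + c + 1) := by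
          rw [Nat.fib_add_two]; push_cast; ring
        have c2 : (Nat.fib (a + 2) : ZMod N) = Nat.fib a + Nat.fib (a + 1) := by
          rw [Nat.fib_add_two]; push_cast; ring
        have h2' : (Nat.fib (a + c + 2) : ZMod N) = Nat.fib (a + 2) := by
          convert h2 using 3 <;> omega
        have h1' : (Nat.fib (a + c + 1) : ZMod N) = Nat.fib (a + 1) := by
          convert h1 using 3; omega
        have := c1.symm.trans (h2'.trans c2)
        rw [h1'] at this
        exact add_right_cancel this
      have e2 : (Nat.fib (a + c + 1) : ZMod N) = Nat.fib (a + 1) := by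
        convert h1 using 3; omega
      simp only [hf, Prod.mk.injEq]
      exact ⟨e1, e2⟩
  rcases Nat.lt_or_ge a b with hab | hab
  · have := key a (b - a) (by rw [show a + (b - a) = b by omega]; exact heq.symm)
    refine ⟨b - a, by omega, ?_⟩
    have : (Nat.fib (b - a) : ZMod N) = (Nat.fib 0 : ZMod N) := congrArg Prod.fst this
    rwa [Nat.fib_zero, Nat.cast_zero, ZMod.natCast_eq_zero_iff] at this
  · have hba : b < a := by omega
    have := key b (a - b) (by rw [show b + (a - b) = a by omega]; exact heq)
    refine ⟨a - b, by omega, ?_⟩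
    have : (Nat.fib (a - b) : ZMod N) = (Nat.fib 0 : ZMod N) := congrArg Prod.fst this
    rwa [Nat.fib_zero, Nat.cast_zero, ZMod.natCast_eq_zero_iff] at this


lemma fibAlpha_mem (N : ℕ) (hN : 0 < N) : 0 < fibAlpha N ∧ N ∣ Nat.fib (fibAlpha N) := by
  have h : {m | 0 < m ∧ N ∣ Nat.fib m}.Nonempty := exists_pos_fib_dvd N hN
  exact Nat.sInf_mem h

lemma fibAlpha_dvd_iff (N : ℕ) (hN : 0 < N) (m : ℕ) (hm : 0 < m) :
    N ∣ Nat.fib m ↔ fibAlpha N ∣ m := by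
  obtain ⟨hα, hdvd⟩ := fibAlpha_mem N hN
  constructor
  · intro h
    have hg : N ∣ Nat.fib (Nat.gcd m (fibAlpha N)) := by
      rw [Nat.fib_gcd]; exact Nat.dvd_gcd h hdvd
    have hgpos : 0 < Nat.gcd m (fibAlpha N) := Nat.gcd_pos_of_pos_left _ hm
    have h1 : fibAlpha N ≤ Nat.gcd m (fibAlpha N) := Nat.sInf_le ⟨hgpos, hg⟩
    have h2 : Nat.gcd m (fibAlpha N) ∣ fibAlpha N := Nat.gcd_dvd_right _ _
    have h3 : Nat.gcd m (fibAlpha N) = fibAlpha N :=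
      le_antisymm (Nat.le_of_dvd hα h2) h1
    rw [← h3]
    exact Nat.gcd_dvd_left _ _
  · intro h
    exact dvd_trans hdvd (Nat.fib_dvd _ _ h)

lemma fib_mul_expand (a : ℕ) (ha : 0 < a) : ∀ j : ℕ, ∃ c d : ℕ,
    Nat.fib (a * (j+1)) = (j+1) * Nat.fib a * Nat.fib (a-1)^j
        + (j+1).choose 2 * Nat.fib (a-1)^(j-1) * Nat.fib a^2 + c * Nat.fib a^3
    ∧ Nat.fib (a * (j+1) + 1) = Nat.fib (a-1)^(j+1) + (j+1) * Nat.fib a * Nat.fib (a-1)^j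
        + d * Nat.fib a^2 := by
  have ha1 : a = (a - 1) + 1 := by omega
  have hfib_a : Nat.fib ((a-1)+1) = Nat.fib a := by rw [← ha1]
  have hfib_succ : Nat.fib (a + 1) = Nat.fib (a-1) + Nat.fib a := by
    conv_lhs => rw [ha1]
    rw [show (a-1)+1+1 = (a-1)+2 from rfl, Nat.fib_add_two, hfib_a]
  intro j
  induction j with
  | zero =>
    refine ⟨0, 0, by simp, by simpa using hfib_succ⟩
  | succ j ih =>
    obtain ⟨c, d, hc, hd⟩ := ih
    have h2 : a * (j+1+1) = a*(j+1) + (a-1) + 1 := by rw [Nat.mul_succ]; omega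
    have e1 : Nat.fib (a * (j+1+1))
        = Nat.fib (a*(j+1)) * Nat.fib (a-1) + Nat.fib (a*(j+1)+1) * Nat.fib a := by
      rw [h2, Nat.fib_add, hfib_a]
    have h3 : a * (j+1+1) + 1 = (a*(j+1)+1) + (a-1) + 1 := by omega
    have e2 : Nat.fib (a * (j+1+1) + 1)
        = Nat.fib (a*(j+1)+1) * Nat.fib (a-1)
          + (Nat.fib (a*(j+1)) + Nat.fib (a*(j+1)+1)) * Nat.fib a := by
      rw [h3, Nat.fib_add, hfib_a, show a*(j+1)+1+1 = a*(j+1)+2 from rfl, Nat.fib_add_two]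
    have hP : (j+1+1).choose 2 = (j+1).choose 2 + (j+1) := by
      rw [Nat.choose_succ_succ]
      simp [Nat.choose_one_right]
      ring
    refine ⟨c * Nat.fib (a-1) + d,
        d * Nat.fib (a-1) + 2*(j+1)*Nat.fib (a-1)^j + (j+1).choose 2 * Nat.fib (a-1)^(j-1) * Nat.fib a
          + c * Nat.fib a^2 + d * Nat.fib a, ?_, ?_⟩
    · rw [e1, hc, hd, hP]
      rcases j with _ | jj
      · simp; ring
      · simp only [Nat.succ_sub_one]
        ring
    · rw [e2, hc, hd]
      rcases j with _ | jj
      · simp; ring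
      · simp only [Nat.succ_sub_one]
        ring


/-- If `p^(v_p(x)+1) ∣ y` and `x ≠ 0` then `v_p (x+y) = v_p x`. -/
lemma factorization_add_eq (p : ℕ) (hp : p.Prime) (x y : ℕ) (hx : x ≠ 0)
    (hy : p ^ (x.factorization p + 1) ∣ y) : (x + y).factorization p = x.factorization p := by
  have hxy : x + y ≠ 0 := by positivity
  have h1 : p ^ (x.factorization p) ∣ x + y :=
    dvd_add (Nat.ordProj_dvd x p) (dvd_trans (pow_dvd_pow p (Nat.le_succ _)) hy)
  have h2 : ¬ p ^ (x.factorization p + 1) ∣ x + y := by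
    intro h
    have hxdvd : p ^ (x.factorization p + 1) ∣ x := by
      have := Nat.dvd_sub h hy
      rwa [Nat.add_sub_cancel] at this
    have := (hp.pow_dvd_iff_le_factorization hx).mp hxdvd
    omega
  apply le_antisymm
  · by_contra hlt
    push_neg at hlt
    exact h2 (dvd_trans (pow_dvd_pow p hlt) (Nat.ordProj_dvd _ p))
  · exact (hp.pow_dvd_iff_le_factorization hxy).mp h1

lemma fib_fact_eq_of_not_dvd (p : ℕ) (hp : p.Prime) (a k : ℕ) (ha : 0 < a)
    (hpa : p ∣ Nat.fib a) (hk : 0 < k) (hpk : ¬ p ∣ k) :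
    (Nat.fib (a * k)).factorization p = (Nat.fib a).factorization p := by
  have ha2 : 2 ≤ a := by
    by_contra h
    interval_cases a <;> simp_all [Nat.fib_one] <;> omega
  have hF : Nat.fib a ≠ 0 := (Nat.fib_pos.mpr ha).ne'
  have hG : ¬ p ∣ Nat.fib (a - 1) := by
    intro h
    have hcop := Nat.fib_coprime_fib_succ (a - 1)
    rw [show a - 1 + 1 = a by omega] at hcop
    have : p ∣ 1 := hcop ▸ Nat.dvd_gcd h hpa
    exact hp.one_lt.ne' (Nat.dvd_one.mp this)
  have hGne : Nat.fib (a - 1) ≠ 0 := fun h0 => hG (h0 ▸ dvd_zero p)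
  have hf1 : 1 ≤ (Nat.fib a).factorization p :=
    (hp.pow_dvd_iff_le_factorization hF).mp (by simpa using hpa)
  obtain ⟨j, rfl⟩ : ∃ j, k = j + 1 := ⟨k - 1, by omega⟩
  obtain ⟨c, d, hc, -⟩ := fib_mul_expand a ha j
  rw [hc]
  set f := (Nat.fib a).factorization p with hfdef
  have hvx : ((j+1) * Nat.fib a * Nat.fib (a-1)^j).factorization p = f := by
    rw [Nat.factorization_mul (by positivity) (by positivity),
        Nat.factorization_mul (by omega) hF, Nat.factorization_pow]
    simp [Nat.factorization_eq_zero_of_not_dvd hpk, Nat.factorization_eq_zero_of_not_dvd hG, hfdef]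
  have hF2 : p ^ (f + 1) ∣ Nat.fib a ^ 2 := by
    calc p ^ (f+1) ∣ (p ^ f)^2 := by rw [← pow_mul]; exact pow_dvd_pow p (by omega)
      _ ∣ Nat.fib a ^ 2 := pow_dvd_pow_of_dvd (Nat.ordProj_dvd _ p) 2
  have hy : p ^ (f + 1) ∣ (j+1).choose 2 * Nat.fib (a-1)^(j-1) * Nat.fib a^2 + c * Nat.fib a^3 := by
    refine dvd_add (hF2.mul_left _) ?_
    calc p ^ (f+1) ∣ Nat.fib a ^ 2 := hF2
      _ ∣ c * Nat.fib a ^ 3 := ⟨c * Nat.fib a, by ring⟩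
  rw [add_assoc]
  rw [← hvx] at hy ⊢
  exact factorization_add_eq p hp _ _ (by positivity) hy

lemma fib_fact_mul_p (p : ℕ) (hp : p.Prime) (hodd : p ≠ 2) (a : ℕ) (ha : 0 < a)
    (hpa : p ∣ Nat.fib a) :
    (Nat.fib (a * p)).factorization p = (Nat.fib a).factorization p + 1 := by
  have hp2 : 2 < p := by
    rcases hp.two_le.lt_or_eq with h | h
    · exact h
    · exact absurd h.symm hodd
  have ha2 : 2 ≤ a := by
    by_contra h
    interval_cases a <;> simp_all [Nat.fib_one]
  have hF : Nat.fib a ≠ 0 := (Nat.fib_pos.mpr ha).ne'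
  have hG : ¬ p ∣ Nat.fib (a - 1) := by
    intro h
    have hcop := Nat.fib_coprime_fib_succ (a - 1)
    rw [show a - 1 + 1 = a by omega] at hcop
    have : p ∣ 1 := hcop ▸ Nat.dvd_gcd h hpa
    exact hp.one_lt.ne' (Nat.dvd_one.mp this)
  have hGne : Nat.fib (a - 1) ≠ 0 := fun h0 => hG (h0 ▸ dvd_zero p)
  have hf1 : 1 ≤ (Nat.fib a).factorization p :=
    (hp.pow_dvd_iff_le_factorization hF).mp (by simpa using hpa)
  obtain ⟨j, hj⟩ : ∃ j, p = j + 1 := ⟨p - 1, by omega⟩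
  obtain ⟨c, d, hc, -⟩ := fib_mul_expand a ha j
  rw [← hj] at hc
  rw [hc]
  set f := (Nat.fib a).factorization p with hfdef
  have hvx : (p * Nat.fib a * Nat.fib (a-1)^j).factorization p = f + 1 := by
    rw [Nat.factorization_mul (by positivity) (by positivity),
        Nat.factorization_mul hp.pos.ne' hF, Nat.factorization_pow]
    simp [hp.factorization_self, Nat.factorization_eq_zero_of_not_dvd hG]
    omega
  have hF2 : p ^ (f + 1) ∣ Nat.fib a ^ 2 := by
    calc p ^ (f+1) ∣ (p ^ f)^2 := by rw [← pow_mul]; exact pow_dvd_pow p (by omega)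
      _ ∣ Nat.fib a ^ 2 := pow_dvd_pow_of_dvd (Nat.ordProj_dvd _ p) 2
  have hy : p ^ (f + 2) ∣ p.choose 2 * Nat.fib (a-1)^(j-1) * Nat.fib a^2 + c * Nat.fib a^3 := by
    refine dvd_add ?_ ?_
    · have h1 : p ∣ p.choose 2 := hp.dvd_choose_self (by norm_num) hp2
      obtain ⟨t, ht⟩ := h1
      obtain ⟨s, hs⟩ := hF2
      refine ⟨t * Nat.fib (a-1)^(j-1) * s, ?_⟩
      rw [ht, hs, pow_succ]
      ring
    · have h3 : p ^ (f+2) ∣ Nat.fib a ^ 3 := by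
        calc p ^ (f+2) ∣ (p^f)^3 := by rw [← pow_mul]; exact pow_dvd_pow p (by omega)
          _ ∣ Nat.fib a ^ 3 := pow_dvd_pow_of_dvd (Nat.ordProj_dvd _ p) 3
      exact h3.mul_left c
  rw [add_assoc, ← hvx]
  refine factorization_add_eq p hp _ _ (by positivity) ?_
  rw [hvx]
  exact dvd_trans (pow_dvd_pow p (by omega)) hy

lemma fib_fact_alpha_mul (p : ℕ) (hp : p.Prime) (hodd : p ≠ 2) :
    ∀ t u : ℕ, 0 < u → ¬ p ∣ u →
      (Nat.fib (fibAlpha p * (p ^ t * u))).factorization p = fibE p + t := by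
  obtain ⟨hα, hdvd⟩ := fibAlpha_mem p hp.pos
  intro t
  induction t with
  | zero =>
    intro u hu hpu
    simpa [fibE] using fib_fact_eq_of_not_dvd p hp (fibAlpha p) u hα hdvd hu hpu
  | succ t ih =>
    intro u hu hpu
    have he : 1 ≤ fibE p := by
      have hF : Nat.fib (fibAlpha p) ≠ 0 := (Nat.fib_pos.mpr hα).ne'
      exact (hp.pow_dvd_iff_le_factorization hF).mp (by simpa using hdvd)
    have hprev := ih u hu hpu
    have ha : 0 < fibAlpha p * (p ^ t * u) := Nat.mul_pos hα (Nat.mul_pos (pow_pos hp.pos t) hu)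
    have hFa : Nat.fib (fibAlpha p * (p ^ t * u)) ≠ 0 := (Nat.fib_pos.mpr ha).ne'
    have hpdvd : p ∣ Nat.fib (fibAlpha p * (p ^ t * u)) := by
      have : 1 ≤ (Nat.fib (fibAlpha p * (p ^ t * u))).factorization p := by omega
      simpa using (hp.pow_dvd_iff_le_factorization hFa).mpr this
    have hrw : fibAlpha p * (p ^ (t+1) * u) = (fibAlpha p * (p ^ t * u)) * p := by ring
    rw [hrw, fib_fact_mul_p p hp hodd _ ha hpdvd, hprev]
    omega

end FibLTE

theorem fibAlpha_prime_pow (p : ℕ) (hp : p.Prime) (hodd : p ≠ 2) (n : ℕ) (hn : fibE p < n) :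
    fibAlpha (p ^ n) = p ^ (n - fibE p) * fibAlpha p := by
  obtain ⟨hα, hdvd⟩ := fibAlpha_mem p hp.pos
  have he : 1 ≤ fibE p := by
    have hF : Nat.fib (fibAlpha p) ≠ 0 := (Nat.fib_pos.mpr hα).ne'
    exact (hp.pow_dvd_iff_le_factorization hF).mp (by simpa [fibE] using hdvd)
  set e := fibE p with hedef
  set α := fibAlpha p with hαdef
  set D := p ^ (n - e) * α with hD
  have hDpos : 0 < D := Nat.mul_pos (pow_pos hp.pos _) hα
  have hDmem : 0 < D ∧ p ^ n ∣ Nat.fib D := by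
    refine ⟨hDpos, ?_⟩
    have hfD : Nat.fib D ≠ 0 := (Nat.fib_pos.mpr hDpos).ne'
    have hv : (Nat.fib D).factorization p = e + (n - e) := by
      have := fib_fact_alpha_mul p hp hodd (n - e) 1 one_pos (by simpa using hp.one_lt.ne')
      simpa [hD, mul_comm] using this
    refine (hp.pow_dvd_iff_le_factorization hfD).mpr ?_
    omega
  have hlb : ∀ m, 0 < m ∧ p ^ n ∣ Nat.fib m → D ≤ m := by
    rintro m ⟨hm, hdvdm⟩
    have hfm : Nat.fib m ≠ 0 := (Nat.fib_pos.mpr hm).ne'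
    have hpm : p ∣ Nat.fib m :=
      dvd_trans (dvd_pow_self p (by omega : n ≠ 0)) hdvdm
    have hαm : α ∣ m := (fibAlpha_dvd_iff p hp.pos m hm).mp hpm
    obtain ⟨k, hk⟩ := hαm
    have hkpos : 0 < k := by
      rcases Nat.eq_zero_or_pos k with h0 | h
      · subst h0; omega
      · exact h
    set t := k.factorization p with ht
    have hksplit : p ^ t * (k / p ^ t) = k := Nat.ordProj_mul_ordCompl_eq_self k p
    have hupos : 0 < k / p ^ t := Nat.ordCompl_pos p hkpos.ne'
    have hpu : ¬ p ∣ k / p ^ t := Nat.not_dvd_ordCompl hp hkpos.ne'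
    have hv : (Nat.fib m).factorization p = e + t := by
      rw [hk, ← hksplit]
      exact fib_fact_alpha_mul p hp hodd t (k / p ^ t) hupos hpu
    have hnle : n ≤ e + t := by
      have := (hp.pow_dvd_iff_le_factorization hfm).mp hdvdm
      omega
    have hDdvd : D ∣ m := by
      rw [hk, ← hksplit, hD]
      obtain ⟨s, hs⟩ : p ^ (n - e) ∣ p ^ t := pow_dvd_pow p (by omega)
      exact ⟨s * (k / p ^ t), by rw [hs]; ring⟩
    exact Nat.le_of_dvd hm hDdvd
  have : fibAlpha (p ^ n) = sInf {m | 0 < m ∧ p ^ n ∣ Nat.fib m} := rfl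
  rw [this]
  refine le_antisymm (Nat.sInf_le hDmem) (le_csInf ⟨D, hDmem⟩ ?_)
  rintro b ⟨hb1, hb2⟩
  exact hlb b ⟨hb1, hb2⟩
end

section
/- For arithmetic functions f, g and real x ≥ 1, ∑_{n ≤ x} (f*g)(a_n) = ∑_{n : α(n) ≤ x} f(n) · ∑_{d ≤ x/α(n)} g(a_{d·α(n)}/n), where f*g denotes Dirichlet convolution. -/
open Finset

lemma fibAlpha_mem_s3 {n m : ℕ} (hm : 0 < m) (h : n ∣ Nat.fib m) :
    0 < fibAlpha n ∧ n ∣ Nat.fib (fibAlpha n) :=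
  Nat.sInf_mem (⟨m, hm, h⟩ : Set.Nonempty {m | 0 < m ∧ n ∣ Nat.fib m})

lemma fibAlpha_spec {n : ℕ} (h : 0 < fibAlpha n) :
    n ∣ Nat.fib (fibAlpha n) := by
  have hne : {m | 0 < m ∧ n ∣ Nat.fib m}.Nonempty := by
    by_contra hc
    rw [Set.not_nonempty_iff_eq_empty] at hc
    simp [fibAlpha, hc] at h
  exact (Nat.sInf_mem hne).2

lemma fibAlpha_dvd {n m : ℕ} (hm : 0 < m) (h : n ∣ Nat.fib m) : fibAlpha n ∣ m := by
  obtain ⟨hpos, hdvd⟩ := fibAlpha_mem_s3 hm h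
  have hg : n ∣ Nat.fib (Nat.gcd m (fibAlpha n)) := by
    rw [Nat.fib_gcd]; exact Nat.dvd_gcd h hdvd
  have hgpos : 0 < Nat.gcd m (fibAlpha n) := Nat.gcd_pos_of_pos_left _ hm
  have hle : fibAlpha n ≤ Nat.gcd m (fibAlpha n) := Nat.sInf_le ⟨hgpos, hg⟩
  have heq : Nat.gcd m (fibAlpha n) = fibAlpha n :=
    le_antisymm (Nat.gcd_le_right _ hpos) hle
  exact heq ▸ Nat.gcd_dvd_left m _

/-- Theorem 1: double counting formula for Dirichlet products at Fibonacci numbers.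
Note that for a positive natural number `k`, `⌊x / k⌋ = ⌊x⌋₊ / k` (natural division),
and the outer sum on the right may be restricted to `n ≤ fib ⌊x⌋₊` since `α n > ⌊x⌋₊`
for larger `n`. -/
theorem sum_dirichlet_fib (f g : ℕ → ℂ) (x : ℝ) (hx : 1 ≤ x) :
    ∑ n ∈ Icc 1 ⌊x⌋₊, ∑ d ∈ (Nat.fib n).divisors, f d * g (Nat.fib n / d)
      = ∑ n ∈ (Icc 1 (Nat.fib ⌊x⌋₊)).filter (fun n => fibAlpha n ≤ ⌊x⌋₊),
          f n * ∑ d ∈ Icc 1 (⌊x⌋₊ / fibAlpha n), g (Nat.fib (d * fibAlpha n) / n) := by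
  set N := ⌊x⌋₊ with hNdef
  simp_rw [Finset.mul_sum]
  rw [Finset.sum_sigma', Finset.sum_sigma']
  refine Finset.sum_bij' (fun p _ => ⟨p.2, p.1 / fibAlpha p.2⟩)
    (fun p _ => ⟨p.2 * fibAlpha p.1, p.1⟩) ?_ ?_ ?_ ?_ ?_
  · -- forward maps into target
    rintro ⟨m, d⟩ hp
    rw [Finset.mem_sigma] at hp
    obtain ⟨hm, hd⟩ := hp
    rw [Finset.mem_Icc] at hm
    rw [Nat.mem_divisors] at hd
    obtain ⟨hdvd, hfibne⟩ := hd
    have hmpos : 0 < m := hm.1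
    have hα : fibAlpha d ∣ m := fibAlpha_dvd hmpos hdvd
    have hαpos : 0 < fibAlpha d := (fibAlpha_mem_s3 hmpos hdvd).1
    have hαle : fibAlpha d ≤ m := Nat.le_of_dvd hmpos hα
    rw [Finset.mem_sigma, Finset.mem_filter, Finset.mem_Icc, Finset.mem_Icc]
    refine ⟨⟨⟨Nat.pos_of_mem_divisors (Nat.mem_divisors.mpr ⟨hdvd, hfibne⟩),
      le_trans (Nat.le_of_dvd (Nat.pos_of_ne_zero hfibne) hdvd)
        (Nat.fib_mono hm.2)⟩, le_trans hαle hm.2⟩,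
      ?_, Nat.div_le_div_right hm.2⟩
    rw [Nat.le_div_iff_mul_le hαpos, one_mul]
    exact hαle
  · -- backward maps into source
    rintro ⟨n, e⟩ hp
    rw [Finset.mem_sigma, Finset.mem_filter, Finset.mem_Icc, Finset.mem_Icc] at hp
    obtain ⟨⟨⟨hn1, hnfib⟩, hαN⟩, he1, heN⟩ := hp
    have hαpos : 0 < fibAlpha n := by
      rcases Nat.eq_zero_or_pos (fibAlpha n) with h0 | h
      · rw [h0, Nat.div_zero] at heN; omega
      · exact h
    have hndvd : n ∣ Nat.fib (e * fibAlpha n) :=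
      dvd_trans (fibAlpha_spec hαpos) (Nat.fib_dvd _ _ (dvd_mul_left _ _))
    have hmN : e * fibAlpha n ≤ N := (Nat.le_div_iff_mul_le hαpos).mp heN
    have hmpos : 0 < e * fibAlpha n := Nat.mul_pos he1 hαpos
    rw [Finset.mem_sigma, Finset.mem_Icc, Nat.mem_divisors]
    exact ⟨⟨hmpos, hmN⟩, hndvd, (Nat.fib_pos.mpr hmpos).ne'⟩
  · -- left inverse
    rintro ⟨m, d⟩ hp
    rw [Finset.mem_sigma] at hp
    obtain ⟨hm, hd⟩ := hp
    rw [Finset.mem_Icc] at hm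
    rw [Nat.mem_divisors] at hd
    have hα : fibAlpha d ∣ m := fibAlpha_dvd hm.1 hd.1
    exact Sigma.ext (Nat.div_mul_cancel hα) (heq_of_eq rfl)
  · -- right inverse
    rintro ⟨n, e⟩ hp
    rw [Finset.mem_sigma, Finset.mem_filter, Finset.mem_Icc, Finset.mem_Icc] at hp
    obtain ⟨⟨⟨hn1, hnfib⟩, hαN⟩, he1, heN⟩ := hp
    have hαpos : 0 < fibAlpha n := by
      rcases Nat.eq_zero_or_pos (fibAlpha n) with h0 | h
      · rw [h0, Nat.div_zero] at heN; omega
      · exact h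
    exact Sigma.ext rfl (heq_of_eq (Nat.mul_div_cancel e hαpos))
  · -- terms equal
    rintro ⟨m, d⟩ hp
    rw [Finset.mem_sigma] at hp
    obtain ⟨hm, hd⟩ := hp
    rw [Finset.mem_Icc] at hm
    rw [Nat.mem_divisors] at hd
    have hα : fibAlpha d ∣ m := fibAlpha_dvd hm.1 hd.1
    simp only
    rw [Nat.div_mul_cancel hα]
end

section
/- If f and g are arithmetic functions with g completely multiplicative and nowhere zero, then for all n ≥ 1, (f*g)(a_n) = g(a_n) · (1 * (f/g)_α)(n). -/
open Finset

lemma fib_cassini (d : ℕ) (i : ℕ) :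
    ((Nat.fib (i+1) : ZMod d))^2 - Nat.fib (i+1) * Nat.fib i - (Nat.fib i : ZMod d)^2
      = (-1)^i := by
  induction i with
  | zero => simp
  | succ i ih =>
      rw [Nat.fib_add_two]
      push_cast
      push_cast at ih
      ring_nf
      ring_nf at ih
      linear_combination -ih

lemma exists_pos_dvd_fib (d : ℕ) (hd : 0 < d) : ∃ m, 0 < m ∧ d ∣ Nat.fib m := by
  haveI : NeZero d := ⟨hd.ne'⟩
  obtain ⟨i, j, hne, hij⟩ := Finite.exists_ne_map_eq_of_infinite
    (fun i : ℕ => ((Nat.fib i : ZMod d), (Nat.fib (i+1) : ZMod d)))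
  wlog h : i < j generalizing i j
  · exact this j i hne.symm hij.symm (by omega)
  obtain ⟨k', hk'⟩ : ∃ k', j = i + k' + 1 := ⟨j - i - 1, by omega⟩
  refine ⟨k' + 1, by omega, ?_⟩
  have e1 := congrArg Prod.fst hij
  have e2 := congrArg Prod.snd hij
  simp only at e1 e2
  have h1 : (Nat.fib (i + k' + 1) : ZMod d) = Nat.fib i := by rw [← hk', ← e1]
  have h2 : (Nat.fib (i + (k'+1) + 1) : ZMod d) = Nat.fib (i+1) := by
    have hj1 : j + 1 = i + (k'+1) + 1 := by omega
    rw [← hj1, ← e2]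
  rw [Nat.fib_add] at h1
  rw [Nat.fib_add] at h2
  have h3 : (Nat.fib (k'+2) : ZMod d) = Nat.fib k' + Nat.fib (k'+1) := by
    rw [Nat.fib_add_two]; push_cast; ring
  push_cast at h1 h2
  set a : ZMod d := (Nat.fib i : ZMod d)
  set b : ZMod d := (Nat.fib (i+1) : ZMod d)
  have key : (Nat.fib (k'+1) : ZMod d) * (b^2 - b*a - a^2) = 0 := by
    rw [show k' + 1 + 1 = k' + 2 from rfl, h3] at h2
    linear_combination b * h1 - a * h2
  have hu : IsUnit ((b:ZMod d)^2 - b*a - a^2) := by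
    rw [fib_cassini d i]
    exact (IsUnit.neg isUnit_one).pow i
  rw [hu.mul_left_eq_zero] at key
  exact (ZMod.natCast_eq_zero_iff _ _).mp key

lemma fibAlpha_spec_s5 (d : ℕ) (hd : 0 < d) :
    0 < fibAlpha d ∧ d ∣ Nat.fib (fibAlpha d) :=
  Nat.sInf_mem (exists_pos_dvd_fib d hd)

lemma dvd_fib_iff (d m : ℕ) (hd : 0 < d) (hm : 0 < m) :
    d ∣ Nat.fib m ↔ fibAlpha d ∣ m := by
  obtain ⟨hαpos, hαdvd⟩ := fibAlpha_spec_s5 d hd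
  constructor
  · intro h
    have hg : d ∣ Nat.fib (Nat.gcd (fibAlpha d) m) := by
      rw [Nat.fib_gcd]; exact Nat.dvd_gcd hαdvd h
    have hgpos : 0 < Nat.gcd (fibAlpha d) m := Nat.gcd_pos_of_pos_right _ hm
    have hle : fibAlpha d ≤ Nat.gcd (fibAlpha d) m := Nat.sInf_le ⟨hgpos, hg⟩
    have := Nat.gcd_le_left m hαpos
    have : Nat.gcd (fibAlpha d) m = fibAlpha d := le_antisymm this hle
    rw [← this]; exact Nat.gcd_dvd_right _ _
  · intro h
    exact hαdvd.trans (Nat.fib_dvd _ _ h)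


/-- Corollary: for `g` completely multiplicative and nowhere zero,
`(f*g)(a_n) = g(a_n) ⬝ (1 * (f/g)_α)(n)`. -/
theorem conv_completely_multiplicative_fib (f g : ℕ → ℂ)
    (hg1 : g 1 = 1) (hgmul : ∀ m n : ℕ, g (m * n) = g m * g n) (hg0 : ∀ n, g n ≠ 0)
    (n : ℕ) (hn : 1 ≤ n) :
    ∑ d ∈ (Nat.fib n).divisors, f d * g (Nat.fib n / d)
      = g (Nat.fib n) *
        ∑ k ∈ n.divisors, ∑ m ∈ (Icc 1 (Nat.fib k)).filter (fun m => fibAlpha m = k),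
          f m / g m := by
  have hfibn : 0 < Nat.fib n := Nat.fib_pos.mpr hn
  have step1 : ∑ d ∈ (Nat.fib n).divisors, f d * g (Nat.fib n / d)
      = g (Nat.fib n) * ∑ d ∈ (Nat.fib n).divisors, f d / g d := by
    rw [Finset.mul_sum]
    refine Finset.sum_congr rfl fun d hd => ?_
    obtain ⟨hdvd, -⟩ := Nat.mem_divisors.mp hd
    have hgs : g (Nat.fib n) = g d * g (Nat.fib n / d) := by
      rw [← hgmul, Nat.mul_div_cancel' hdvd]
    rw [hgs]
    have := hg0 d
    field_simp
  rw [step1]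
  congr 1
  rw [← Finset.sum_sigma (n.divisors)
    (fun k => (Icc 1 (Nat.fib k)).filter (fun m => fibAlpha m = k)) (fun p => f p.2 / g p.2)]
  refine Finset.sum_nbij' (fun d => (⟨fibAlpha d, d⟩ : Σ _ : ℕ, ℕ)) (fun p => p.2)
    ?_ ?_ ?_ ?_ ?_
  · intro d hd
    have hdpos : 0 < d := Nat.pos_of_mem_divisors hd
    obtain ⟨hdvd, -⟩ := Nat.mem_divisors.mp hd
    obtain ⟨hαpos, hαdvd⟩ := fibAlpha_spec_s5 d hdpos
    have hαn : fibAlpha d ∣ n := (dvd_fib_iff d n hdpos hn).mp hdvd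
    refine Finset.mem_sigma.mpr ⟨Nat.mem_divisors.mpr ⟨hαn, by omega⟩, ?_⟩
    refine Finset.mem_filter.mpr ⟨Finset.mem_Icc.mpr ⟨hdpos, ?_⟩, rfl⟩
    exact Nat.le_of_dvd (Nat.fib_pos.mpr hαpos) hαdvd
  · rintro ⟨k, m⟩ hp
    obtain ⟨hk, hm⟩ := Finset.mem_sigma.mp hp
    obtain ⟨hicc, hα⟩ := Finset.mem_filter.mp hm
    obtain ⟨hm1, -⟩ := Finset.mem_Icc.mp hicc
    simp only at hα hm1 hk
    have hmfib : m ∣ Nat.fib k := by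
      rw [← hα]; exact (fibAlpha_spec_s5 m hm1).2
    obtain ⟨hkn, -⟩ := Nat.mem_divisors.mp hk
    exact Nat.mem_divisors.mpr ⟨hmfib.trans (Nat.fib_dvd _ _ hkn), by omega⟩
  · intro d _; rfl
  · rintro ⟨k, m⟩ hp
    obtain ⟨-, hm⟩ := Finset.mem_sigma.mp hp
    obtain ⟨-, hα⟩ := Finset.mem_filter.mp hm
    simp only at hα
    simp [hα]
  · intro d _; rfl
end

section
/- For real x ≥ 1, log ∏_{n ≤ x} a_n = (log r)/2 · ⌊x⌋² + (log(r/5))/2 · ⌊x⌋ + ∑_{n ≤ x} log(1 - (-1)^n/r^{2n}), where r = (1+√5)/2 is the golden ratio. -/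
open Finset

lemma fib_eq_aux (n : ℕ) : (Nat.fib n : ℝ)
    = Real.goldenRatio ^ n / Real.sqrt 5 * (1 - (-1:ℝ)^n / Real.goldenRatio ^ (2*n)) := by
  have hr : (0:ℝ) < Real.goldenRatio := Real.goldenRatio_pos
  have h5 : Real.sqrt 5 ≠ 0 := by positivity
  have hrn : Real.goldenRatio ^ n ≠ 0 := by positivity
  rw [Real.coe_fib_eq]
  have h1 : ((-1:ℝ))^n = Real.goldenRatio ^ n * Real.goldenConj ^ n := by
    rw [← mul_pow, Real.goldenRatio_mul_goldenConj]
  have h2 : Real.goldenRatio ^ (2*n) = Real.goldenRatio ^ n * Real.goldenRatio ^ n := by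
    rw [two_mul, pow_add]
  rw [h1, h2]
  field_simp

lemma sum_id_aux (N : ℕ) : (∑ i ∈ Icc 1 N, (i:ℝ)) = N*(N+1)/2 := by
  induction N with
  | zero => simp
  | succ n ih =>
    rw [Finset.sum_Icc_succ_top (by omega)]
    push_cast
    rw [ih]; ring

/-- `log ∏_{n ≤ x} a_n` in terms of the golden ratio `r = (1+√5)/2`. -/
theorem log_prod_fib (x : ℝ) (hx : 1 ≤ x) :
    Real.log (∏ n ∈ Icc 1 ⌊x⌋₊, (Nat.fib n : ℝ))
      = Real.log ((1 + Real.sqrt 5) / 2) / 2 * (⌊x⌋₊ : ℝ) ^ 2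
        + Real.log (((1 + Real.sqrt 5) / 2) / 5) / 2 * (⌊x⌋₊ : ℝ)
        + ∑ n ∈ Icc 1 ⌊x⌋₊,
            Real.log (1 - (-1 : ℝ) ^ n / ((1 + Real.sqrt 5) / 2) ^ (2 * n)) := by
  rw [show (1 + Real.sqrt 5)/2 = Real.goldenRatio from rfl]
  set N := ⌊x⌋₊ with hN
  have hr : (0:ℝ) < Real.goldenRatio := Real.goldenRatio_pos
  rw [Real.log_prod (fun n hn => by
    have h1 : 1 ≤ n := (Finset.mem_Icc.1 hn).1
    have : 0 < Nat.fib n := Nat.fib_pos.2 h1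
    positivity)]
  have key : ∀ n ∈ Icc 1 N, Real.log (Nat.fib n : ℝ)
      = (n:ℝ) * Real.log Real.goldenRatio - Real.log 5 / 2
        + Real.log (1 - (-1:ℝ)^n / Real.goldenRatio ^ (2*n)) := by
    intro n hn
    have h1 : 1 ≤ n := (Finset.mem_Icc.1 hn).1
    have hf : (0:ℝ) < Nat.fib n := by exact_mod_cast Nat.fib_pos.2 h1
    have ht : (1 - (-1:ℝ)^n / Real.goldenRatio ^ (2*n)) ≠ 0 := by
      intro h
      rw [fib_eq_aux n, h, mul_zero] at hf
      exact lt_irrefl 0 hf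
    rw [fib_eq_aux n, Real.log_mul (by positivity) ht,
      Real.log_div (by positivity) (by positivity), Real.log_pow,
      Real.log_sqrt (by norm_num)]
  rw [Finset.sum_congr rfl key]
  rw [Finset.sum_add_distrib, Finset.sum_sub_distrib, ← Finset.sum_mul, sum_id_aux,
    Finset.sum_const, Nat.card_Icc]
  have hlogdiv : Real.log (Real.goldenRatio / 5) = Real.log Real.goldenRatio - Real.log 5 :=
    Real.log_div (ne_of_gt hr) (by norm_num)
  rw [hlogdiv]
  simp only [nsmul_eq_mul]
  have : ((N + 1 - 1 : ℕ) : ℝ) = N := by simp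
  rw [this]
  ring
end

section
/- ∑_{n ≤ x} μ(n)·⌊x/n⌋² = x²/ζ(2) + O(x log x) as x → ∞, where μ is the Möbius function. -/
open Finset Filter Asymptotics Real ArithmeticFunction

noncomputable def gmu : ℕ → ℝ := fun n => (moebius n : ℝ) / (n : ℝ) ^ 2

lemma gmu_zero : gmu 0 = 0 := by simp [gmu]

lemma gmu_norm_le (n : ℕ) : ‖gmu n‖ ≤ ((n : ℝ) ^ 2)⁻¹ := by
  rcases eq_or_ne n 0 with rfl | hn
  · simp [gmu]
  · have h1 : |(moebius n : ℝ)| ≤ 1 := by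
      have := (abs_moebius_le_one (n := n))
      exact_mod_cast (by exact_mod_cast this : |((moebius n : ℤ) : ℝ)| ≤ 1)
    have hn2 : (0:ℝ) < (n:ℝ) ^ 2 := by positivity
    rw [gmu, Real.norm_eq_abs, abs_div, abs_of_pos hn2, div_le_iff₀ hn2]
    calc |(moebius n : ℝ)| ≤ 1 := h1
      _ = ((n:ℝ)^2)⁻¹ * (n:ℝ)^2 := by field_simp
    
lemma summable_gmu : Summable gmu := by
  refine Summable.of_norm_bounded (g := fun n => ((n : ℝ) ^ 2)⁻¹) ?_ gmu_norm_le
  simpa using Real.summable_one_div_nat_pow.mpr one_lt_two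

lemma gmu_tsum : ∑' n : ℕ, gmu n = 6 / π ^ 2 := by
  have hs : 1 < (2 : ℂ).re := by norm_num
  have h1 := LSeries_zeta_mul_Lseries_moebius (s := 2) hs
  rw [LSeries_zeta_eq_riemannZeta hs, riemannZeta_two] at h1
  have h2 : LSeries (fun n => ((moebius n : ℤ) : ℂ)) 2
      = ((∑' n : ℕ, gmu n : ℝ) : ℂ) := by
    rw [Complex.ofReal_tsum, LSeries]
    congr 1; funext n
    rcases eq_or_ne n 0 with rfl | hn
    · simp [gmu]
    · rw [LSeries.term_of_ne_zero hn, gmu,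
        show (2:ℂ) = ((2:ℕ):ℂ) by norm_num, Complex.cpow_natCast]
      push_cast
      ring
  rw [h2] at h1
  have hπ : (π : ℝ) ≠ 0 := Real.pi_ne_zero
  have h3 : (π ^ 2 / 6) * (∑' n : ℕ, gmu n) = 1 := by exact_mod_cast h1
  rw [eq_div_iff (pow_ne_zero 2 hπ)]
  linarith [h3]

set_option maxHeartbeats 1000000 in
lemma gmu_tail (N : ℕ) (hN : 1 ≤ N) :
    |(∑' n : ℕ, gmu n) - ∑ n ∈ Icc 1 N, gmu n| ≤ 1 / (N : ℝ) := by
  have hrange : ∑ n ∈ range (N+1), gmu n = ∑ n ∈ Icc 1 N, gmu n := by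
    refine (Finset.sum_subset ?_ ?_).symm
    · intro i hi
      simp only [mem_Icc] at hi
      simp [Finset.mem_range]; omega
    · intro i hi hni
      simp only [mem_Icc, Finset.mem_range] at hi hni
      have : i = 0 := by omega
      simp [this, gmu_zero]
  have hkey := Summable.sum_add_tsum_nat_add (N+1) summable_gmu
  have heq : (∑' n : ℕ, gmu n) - ∑ n ∈ Icc 1 N, gmu n = ∑' i : ℕ, gmu (i + (N+1)) := by
    rw [← hrange]; linarith [hkey]
  rw [heq]
  have hsum2 : Summable (fun n : ℕ => ((n : ℝ) ^ 2)⁻¹) := by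
    simpa using Real.summable_one_div_nat_pow.mpr one_lt_two
  have hsum3 : Summable (fun i : ℕ => (((i + (N+1) : ℕ) : ℝ) ^ 2)⁻¹) :=
    (summable_nat_add_iff (N+1)).mpr hsum2
  calc |∑' i : ℕ, gmu (i + (N+1))|
      ≤ ∑' i : ℕ, ‖gmu (i + (N+1))‖ :=
        norm_tsum_le_tsum_norm ((summable_nat_add_iff (N+1)).mpr summable_gmu).norm
    _ ≤ ∑' i : ℕ, (((i + (N+1) : ℕ) : ℝ) ^ 2)⁻¹ :=
        Summable.tsum_le_tsum (fun i => gmu_norm_le _)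
          ((summable_nat_add_iff (N+1)).mpr summable_gmu).norm hsum3
    _ ≤ 1 / (N : ℝ) := by
        apply Real.tsum_le_of_sum_range_le (fun n => by positivity)
        intro m
        have hre : ∑ i ∈ range m, (((i + (N+1) : ℕ) : ℝ) ^ 2)⁻¹
            = ∑ j ∈ Ioc N (N + m), ((j : ℝ) ^ 2)⁻¹ := by
          rw [← Finset.Ico_add_one_add_one_eq_Ioc, Finset.sum_Ico_eq_sum_range,
            show N + m + 1 - (N + 1) = m by omega]
          exact Finset.sum_congr rfl fun i _ => by rw [Nat.add_comm]
        rw [hre]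
        have := sum_Ioc_inv_sq_le_sub (α := ℝ) (k := N) (n := N + m)
          (by omega) (by omega)
        have hN0 : (0:ℝ) < N := by exact_mod_cast hN
        have hNm : (0:ℝ) ≤ ((N + m : ℕ) : ℝ)⁻¹ := by positivity
        rw [one_div]
        linarith

lemma abs_moebius_real_le_one (n : ℕ) : |(moebius n : ℝ)| ≤ 1 := by
  exact_mod_cast (abs_moebius_le_one (n := n))

theorem moebius_floor_sq_sum_asymp :
    (fun x : ℝ =>
        (∑ n ∈ Icc 1 ⌊x⌋₊, (ArithmeticFunction.moebius n : ℝ) * (⌊x / (n : ℝ)⌋ : ℝ) ^ 2)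
          - x ^ 2 / (Real.pi ^ 2 / 6))
      =O[atTop] fun x : ℝ => x * Real.log x := by
  rw [isBigO_iff]
  refine ⟨6, ?_⟩
  filter_upwards [eventually_ge_atTop (3:ℝ)] with x hx
  simp only [Real.norm_eq_abs]
  have hx0 : (0:ℝ) < x := by linarith
  set N := ⌊x⌋₊ with hNdef
  have hN1 : 1 ≤ N := Nat.le_floor (by exact_mod_cast (by linarith : (1:ℝ) ≤ x))
  have hNx : (N:ℝ) ≤ x := Nat.floor_le hx0.le
  have hxN : x < N + 1 := Nat.lt_floor_add_one x
  have hN0 : (0:ℝ) < N := by exact_mod_cast hN1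
  have hlog : 1 ≤ Real.log x := by
    rw [Real.le_log_iff_exp_le hx0]
    calc Real.exp 1 ≤ 2.7182818286 := Real.exp_one_lt_d9.le
      _ ≤ x := by linarith
  set S := ∑' n : ℕ, gmu n with hSdef
  set P := ∑ n ∈ Icc 1 N, gmu n with hPdef
  set T := ∑ n ∈ Icc 1 N, (moebius n : ℝ) * (⌊x / (n:ℝ)⌋ : ℝ)^2 with hTdef
  set A := ∑ n ∈ Icc 1 N, (moebius n : ℝ) * ((⌊x / (n:ℝ)⌋ : ℝ)^2 - (x/(n:ℝ))^2) with hAdef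
  have hS : S = 6 / π^2 := gmu_tsum
  have hπ : (π:ℝ) ≠ 0 := Real.pi_ne_zero
  have hsplit : ∑ n ∈ Icc 1 N, (moebius n : ℝ) * (x/(n:ℝ))^2 = x^2 * P := by
    rw [hPdef, Finset.mul_sum]
    refine Finset.sum_congr rfl fun n _ => ?_
    rw [gmu, div_pow]; ring
  have hkey : T - x^2/(π^2/6) = A + x^2 * (P - S) := by
    rw [hAdef]
    simp only [mul_sub, Finset.sum_sub_distrib]
    rw [hsplit, ← hTdef, hS]
    field_simp
    ring
  have hA : |A| ≤ 2*x*(1 + Real.log x) := by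
    have hterm : ∀ n ∈ Icc 1 N,
        |(moebius n : ℝ) * ((⌊x / (n:ℝ)⌋ : ℝ)^2 - (x/(n:ℝ))^2)| ≤ 2 * (x / (n:ℝ)) := by
      intro n hn
      have hn1 : 1 ≤ n := (Finset.mem_Icc.mp hn).1
      have hn0 : (0:ℝ) < n := by exact_mod_cast hn1
      set y := x / (n:ℝ) with hy
      have hy0 : (0:ℝ) ≤ y := by positivity
      have hfl : ((⌊y⌋ : ℤ) : ℝ) ≤ y := Int.floor_le y
      have hfl0 : (0:ℝ) ≤ ((⌊y⌋ : ℤ) : ℝ) := by exact_mod_cast Int.floor_nonneg.mpr hy0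
      have hfl1 : y < ((⌊y⌋ : ℤ) : ℝ) + 1 := Int.lt_floor_add_one y
      rw [abs_mul]
      have h2 : |((⌊y⌋ : ℤ) : ℝ)^2 - y^2| ≤ 2*y := by
        rw [abs_le]; constructor <;> nlinarith
      calc |(moebius n : ℝ)| * |((⌊y⌋ : ℤ) : ℝ)^2 - y^2| ≤ 1 * (2*y) :=
            mul_le_mul (abs_moebius_real_le_one n) h2 (abs_nonneg _) zero_le_one
        _ = 2 * y := by ring
    calc |A| ≤ ∑ n ∈ Icc 1 N, |(moebius n : ℝ) * ((⌊x / (n:ℝ)⌋ : ℝ)^2 - (x/(n:ℝ))^2)| :=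
          Finset.abs_sum_le_sum_abs _ _
      _ ≤ ∑ n ∈ Icc 1 N, 2*(x/(n:ℝ)) := Finset.sum_le_sum hterm
      _ = 2*x*∑ n ∈ Icc 1 N, ((n:ℝ))⁻¹ := by
          rw [Finset.mul_sum]; exact Finset.sum_congr rfl fun n _ => by ring
      _ ≤ 2*x*(1 + Real.log N) := by
          have hH : ∑ n ∈ Icc 1 N, ((n:ℝ))⁻¹ ≤ 1 + Real.log N := by
            have h := harmonic_le_one_add_log N
            rw [harmonic_eq_sum_Icc] at h
            push_cast at h
            exact h
          have h2x : (0:ℝ) ≤ 2*x := by positivity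
          exact mul_le_mul_of_nonneg_left hH h2x
      _ ≤ 2*x*(1 + Real.log x) := by
          gcongr
  have hB : |x^2 * (P - S)| ≤ 2*x := by
    have htail : |S - P| ≤ 1 / (N:ℝ) := gmu_tail N hN1
    rw [abs_mul, abs_of_nonneg (by positivity : (0:ℝ) ≤ x^2)]
    calc x^2 * |P - S| ≤ x^2 * (1/(N:ℝ)) := by
          rw [abs_sub_comm]
          exact mul_le_mul_of_nonneg_left htail (by positivity)
      _ ≤ 2*x := by
          rw [mul_one_div, div_le_iff₀ hN0]
          nlinarith
  rw [hkey]
  have habs : |x * Real.log x| = x * Real.log x := abs_of_nonneg (by nlinarith)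
  rw [habs]
  calc |A + x^2 * (P - S)| ≤ |A| + |x^2 * (P - S)| := abs_add_le _ _
    _ ≤ 2*x*(1 + Real.log x) + 2*x := add_le_add hA hB
    _ ≤ 6 * (x * Real.log x) := by nlinarith
end
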